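/- Let v ∈ C³([t_{k-1}, t_{k+1}]) and q ∈ C²([t_{k-1}, t_k]), with Π₂v the quadratic interpolant of v at t_{k-1}, t_k, t_{k+1} and Π₁q the linear interpolant of q at t_{k-1}, t_k; write Ẽ₂v = v - Π₂v, Ẽ₁q = q - Π₁q, τ_k = t_k - t_{k-1}, τ_{k+1} = t_{k+1} - t_k. Then ∫_{t_{k-1}}^{t_k} q'(t)(Ẽ₂v)'(t) dt = [∫_{t_k}^{t_{k+1}} (t_{k+1}-s)² v'''(s) ds] · ∫_{t_{k-1}}^{t_k} (Ẽ₁q)(t) dt / ((τ_{k+1}+τ_k)τ_{k+1}) − [∫_{t_{k-1}}^{t_k} (s-t_{k-1})² v'''(s) ds] · ∫_{t_{k-1}}^{t_k} (Ẽ₁q)(t) dt / ((τ_{k+1}+τ_k)τ_k) + ∫_{t_{k-1}}^{t_k} v'''(s) [∫_{t_{k-1}}^{s} (Ẽ₁q)(t) dt] ds. -/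

import Mathlib

open intervalIntegral



/-- Taylor with integral remainder, expanded at the left endpoint. -/
lemma taylor_aux_right (b c : ℝ) (hbc : b ≤ c) (v v1 v2 v3 : ℝ → ℝ)
    (h1 : ∀ t ∈ Set.Icc b c, HasDerivAt v (v1 t) t)
    (h2 : ∀ t ∈ Set.Icc b c, HasDerivAt v1 (v2 t) t)
    (h3 : ∀ t ∈ Set.Icc b c, HasDerivAt v2 (v3 t) t)
    (h3c : ContinuousOn v3 (Set.Icc b c)) :
    ∫ s in b..c, (c - s) ^ 2 * v3 s
      = -(c - b) ^ 2 * v2 b - 2 * (c - b) * v1 b + 2 * (v c - v b) := by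
  have huIcc : Set.uIcc b c = Set.Icc b c := Set.uIcc_of_le hbc
  have hv1c : ContinuousOn v1 (Set.Icc b c) := fun t ht => ((h2 t ht).continuousAt).continuousWithinAt
  have hv2c : ContinuousOn v2 (Set.Icc b c) := fun t ht => ((h3 t ht).continuousAt).continuousWithinAt
  have hu : ∀ s ∈ Set.uIcc b c, HasDerivAt (fun s => (c - s) ^ 2) ((-2) * (c - s)) s := by
    intro s _
    have := ((hasDerivAt_id s).const_sub c).pow 2
    simp only [id_eq] at this; refine this.congr_deriv ?_; push_cast; ring
  have step1 : ∫ s in b..c, (c - s) ^ 2 * v3 s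
      = (c - c) ^ 2 * v2 c - (c - b) ^ 2 * v2 b - ∫ s in b..c, ((-2) * (c - s)) * v2 s := by
    apply integral_mul_deriv_eq_deriv_mul hu (fun s hs => h3 s (huIcc ▸ hs))
    · apply ContinuousOn.intervalIntegrable; rw [huIcc]; fun_prop
    · apply ContinuousOn.intervalIntegrable; rw [huIcc]; exact h3c
  have hu2 : ∀ s ∈ Set.uIcc b c, HasDerivAt (fun s => (c - s)) (-1 : ℝ) s := by
    intro s _
    simpa using ((hasDerivAt_id s).const_sub c)
  have step2 : ∫ s in b..c, (c - s) * v2 s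
      = (c - c) * v1 c - (c - b) * v1 b - ∫ s in b..c, (-1 : ℝ) * v1 s := by
    apply integral_mul_deriv_eq_deriv_mul hu2 (fun s hs => h2 s (huIcc ▸ hs))
    · apply ContinuousOn.intervalIntegrable; rw [huIcc]; fun_prop
    · apply ContinuousOn.intervalIntegrable; rw [huIcc]; exact hv2c
  have step3 : ∫ s in b..c, v1 s = v c - v b := by
    apply integral_eq_sub_of_hasDerivAt (fun s hs => h1 s (huIcc ▸ hs))
    apply ContinuousOn.intervalIntegrable; rw [huIcc]; exact hv1c
  have e1 : ∫ s in b..c, ((-2) * (c - s)) * v2 s = (-2) * ∫ s in b..c, (c - s) * v2 s := by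
    rw [← integral_const_mul]; congr 1; ext s; ring
  have e2 : ∫ s in b..c, (-1 : ℝ) * v1 s = (-1) * ∫ s in b..c, v1 s := by
    rw [← integral_const_mul]
  rw [step1, e1, step2, e2, step3]; ring

lemma taylor_aux_left (a b : ℝ) (hab : a ≤ b) (v v1 v2 v3 : ℝ → ℝ)
    (h1 : ∀ t ∈ Set.Icc a b, HasDerivAt v (v1 t) t)
    (h2 : ∀ t ∈ Set.Icc a b, HasDerivAt v1 (v2 t) t)
    (h3 : ∀ t ∈ Set.Icc a b, HasDerivAt v2 (v3 t) t)
    (h3c : ContinuousOn v3 (Set.Icc a b)) :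
    ∫ s in a..b, (s - a) ^ 2 * v3 s
      = (b - a) ^ 2 * v2 b - 2 * (b - a) * v1 b + 2 * (v b - v a) := by
  have huIcc : Set.uIcc a b = Set.Icc a b := Set.uIcc_of_le hab
  have hv1c : ContinuousOn v1 (Set.Icc a b) := fun t ht => ((h2 t ht).continuousAt).continuousWithinAt
  have hv2c : ContinuousOn v2 (Set.Icc a b) := fun t ht => ((h3 t ht).continuousAt).continuousWithinAt
  have hu : ∀ s ∈ Set.uIcc a b, HasDerivAt (fun s => (s - a) ^ 2) (2 * (s - a)) s := by
    intro s _
    have := ((hasDerivAt_id s).sub_const a).pow 2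
    simp only [id_eq] at this; refine this.congr_deriv ?_; push_cast; ring
  have step1 : ∫ s in a..b, (s - a) ^ 2 * v3 s
      = (b - a) ^ 2 * v2 b - (a - a) ^ 2 * v2 a - ∫ s in a..b, (2 * (s - a)) * v2 s := by
    apply integral_mul_deriv_eq_deriv_mul hu (fun s hs => h3 s (huIcc ▸ hs))
    · apply ContinuousOn.intervalIntegrable; rw [huIcc]; fun_prop
    · apply ContinuousOn.intervalIntegrable; rw [huIcc]; exact h3c
  have hu2 : ∀ s ∈ Set.uIcc a b, HasDerivAt (fun s => (s - a)) (1 : ℝ) s := by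
    intro s _
    simpa using ((hasDerivAt_id s).sub_const a)
  have step2 : ∫ s in a..b, (s - a) * v2 s
      = (b - a) * v1 b - (a - a) * v1 a - ∫ s in a..b, (1 : ℝ) * v1 s := by
    apply integral_mul_deriv_eq_deriv_mul hu2 (fun s hs => h2 s (huIcc ▸ hs))
    · apply ContinuousOn.intervalIntegrable; rw [huIcc]; fun_prop
    · apply ContinuousOn.intervalIntegrable; rw [huIcc]; exact hv2c
  have step3 : ∫ s in a..b, v1 s = v b - v a := by
    apply integral_eq_sub_of_hasDerivAt (fun s hs => h1 s (huIcc ▸ hs))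
    apply ContinuousOn.intervalIntegrable; rw [huIcc]; exact hv1c
  have e1 : ∫ s in a..b, (2 * (s - a)) * v2 s = 2 * ∫ s in a..b, (s - a) * v2 s := by
    rw [← integral_const_mul]; congr 1; ext s; ring
  have e2 : ∫ s in a..b, (1 : ℝ) * v1 s = ∫ s in a..b, v1 s := by
    simp
  rw [step1, e1, step2, e2, step3]; ring


theorem stmt_16 (a b c : ℝ) (hab : a < b) (hbc : b < c)
    (v v1 v2 v3 : ℝ → ℝ)
    (hv1 : ∀ t ∈ Set.Icc a c, HasDerivAt v (v1 t) t)
    (hv2 : ∀ t ∈ Set.Icc a c, HasDerivAt v1 (v2 t) t)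
    (hv3 : ∀ t ∈ Set.Icc a c, HasDerivAt v2 (v3 t) t)
    (hv3cont : ContinuousOn v3 (Set.Icc a c))
    (q q' q'' : ℝ → ℝ)
    (hq' : ∀ t ∈ Set.Icc a b, HasDerivAt q (q' t) t)
    (hq'' : ∀ t ∈ Set.Icc a b, HasDerivAt q' (q'' t) t)
    (hq''cont : ContinuousOn q'' (Set.Icc a b))
    (P2 E1q : ℝ → ℝ)
    (hP2 : ∀ t, P2 t = v a * ((t - b) * (t - c) / ((a - b) * (a - c)))
        + v b * ((t - a) * (t - c) / ((b - a) * (b - c)))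
        + v c * ((t - a) * (t - b) / ((c - a) * (c - b))))
    (hE1q : ∀ t, E1q t = q t - (q a + (q b - q a) * (t - a) / (b - a))) :
    ∫ t in a..b, q' t * (v1 t - deriv P2 t)
      = (∫ s in b..c, (c - s) ^ 2 * v3 s) * (∫ t in a..b, E1q t)
            / (((c - b) + (b - a)) * (c - b))
        - (∫ s in a..b, (s - a) ^ 2 * v3 s) * (∫ t in a..b, E1q t)
            / (((c - b) + (b - a)) * (b - a))
        + ∫ s in a..b, v3 s * (∫ t in a..s, E1q t) := by
  -- basic nonzeroness
  have hba : b - a ≠ 0 := sub_ne_zero.mpr hab.ne'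
  have hcb : c - b ≠ 0 := sub_ne_zero.mpr hbc.ne'
  have hac : a < c := hab.trans hbc
  have hca : c - a ≠ 0 := sub_ne_zero.mpr hac.ne'
  have hab' : a - b ≠ 0 := sub_ne_zero.mpr hab.ne
  have hbc' : b - c ≠ 0 := sub_ne_zero.mpr hbc.ne
  have hac' : a - c ≠ 0 := sub_ne_zero.mpr hac.ne
  have hIab : Set.uIcc a b = Set.Icc a b := Set.uIcc_of_le hab.le
  have hIbc : Set.uIcc b c = Set.Icc b c := Set.uIcc_of_le hbc.le
  have hsub : Set.Icc a b ⊆ Set.Icc a c := Set.Icc_subset_Icc le_rfl hbc.le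
  have hsub' : Set.Icc b c ⊆ Set.Icc a c := Set.Icc_subset_Icc hab.le le_rfl
  -- substitute the explicit formulas
  have hP2' : P2 = fun t => v a * ((t - b) * (t - c) / ((a - b) * (a - c)))
        + v b * ((t - a) * (t - c) / ((b - a) * (b - c)))
        + v c * ((t - a) * (t - b) / ((c - a) * (c - b))) := funext hP2
  have hE1q' : E1q = fun t => q t - (q a + (q b - q a) * (t - a) / (b - a)) := funext hE1q
  subst hP2' hE1q'
  set g : ℝ → ℝ := fun t => q t - (q a + (q b - q a) * (t - a) / (b - a)) with hg
  set m : ℝ := (q b - q a) / (b - a) with hm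
  -- derivative of the quadratic interpolant
  set p2' : ℝ → ℝ := fun t => v a * ((2 * t - b - c) / ((a - b) * (a - c)))
      + v b * ((2 * t - a - c) / ((b - a) * (b - c)))
      + v c * ((2 * t - a - b) / ((c - a) * (c - b))) with hp2'
  set C : ℝ := 2 * v a / ((a - b) * (a - c)) + 2 * v b / ((b - a) * (b - c))
      + 2 * v c / ((c - a) * (c - b)) with hC
  have key : ∀ t, HasDerivAt (fun t => v a * ((t - b) * (t - c) / ((a - b) * (a - c)))
        + v b * ((t - a) * (t - c) / ((b - a) * (b - c)))
        + v c * ((t - a) * (t - b) / ((c - a) * (c - b)))) (p2' t) t := by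
    intro t
    have h1 := ((((hasDerivAt_id t).sub_const b).mul ((hasDerivAt_id t).sub_const c)).div_const
      ((a - b) * (a - c))).const_mul (v a)
    have h2 := ((((hasDerivAt_id t).sub_const a).mul ((hasDerivAt_id t).sub_const c)).div_const
      ((b - a) * (b - c))).const_mul (v b)
    have h3 := ((((hasDerivAt_id t).sub_const a).mul ((hasDerivAt_id t).sub_const b)).div_const
      ((c - a) * (c - b))).const_mul (v c)
    have := (h1.add h2).add h3
    simp only [id_eq] at this
    refine this.congr_deriv ?_
    simp only [hp2']
    ring
  have key2 : ∀ t, HasDerivAt p2' C t := by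
    intro t
    have h1 := (((((hasDerivAt_id t).const_mul 2).sub_const b).sub_const c).div_const
      ((a - b) * (a - c))).const_mul (v a)
    have h2 := (((((hasDerivAt_id t).const_mul 2).sub_const a).sub_const c).div_const
      ((b - a) * (b - c))).const_mul (v b)
    have h3 := (((((hasDerivAt_id t).const_mul 2).sub_const a).sub_const b).div_const
      ((c - a) * (c - b))).const_mul (v c)
    have := (h1.add h2).add h3
    simp only [id_eq] at this
    refine this.congr_deriv ?_
    simp only [hC]
    ring
  have hderivP2 : ∀ t : ℝ, deriv (fun t => v a * ((t - b) * (t - c) / ((a - b) * (a - c)))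
        + v b * ((t - a) * (t - c) / ((b - a) * (b - c)))
        + v c * ((t - a) * (t - b) / ((c - a) * (c - b)))) t = p2' t := fun t => (key t).deriv
  have hp2'cont : Continuous p2' := by rw [hp2']; fun_prop
  -- continuity facts
  have hv1c : ContinuousOn v1 (Set.Icc a c) := fun t ht => ((hv2 t ht).continuousAt).continuousWithinAt
  have hv2c : ContinuousOn v2 (Set.Icc a c) := fun t ht => ((hv3 t ht).continuousAt).continuousWithinAt
  have hq'c : ContinuousOn q' (Set.Icc a b) := fun t ht => ((hq'' t ht).continuousAt).continuousWithinAt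
  have hqc : ContinuousOn q (Set.Icc a b) := fun t ht => ((hq' t ht).continuousAt).continuousWithinAt
  have hgc : ContinuousOn g (Set.Icc a b) := by
    rw [hg]; apply hqc.sub; fun_prop
  -- g derivatives and boundary values
  have hg' : ∀ t ∈ Set.Icc a b, HasDerivAt g (q' t - m) t := by
    intro t ht
    have hlin : HasDerivAt (fun t : ℝ => q a + (q b - q a) * (t - a) / (b - a)) m t := by
      have := ((((hasDerivAt_id t).sub_const a).const_mul (q b - q a)).div_const (b - a)).const_add (q a)
      simp only [id_eq, mul_one] at this
      exact this
    exact (hq' t ht).sub hlin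
  have hga : g a = 0 := by simp [hg]
  have hgb : g b = 0 := by
    simp only [hg]
    field_simp
    ring
  -- the clamped extension of g and its primitive
  set clamp : ℝ → ℝ := fun t => max a (min t b) with hclamp
  have hclampc : Continuous clamp := by rw [hclamp]; fun_prop
  have hclampmem : ∀ t, clamp t ∈ Set.Icc a b := by
    intro t
    exact ⟨le_max_left _ _, max_le hab.le (min_le_right _ _)⟩
  have hclampeq : ∀ t ∈ Set.Icc a b, clamp t = t := by
    intro t ht
    rw [hclamp]
    simp only [min_eq_left ht.2, max_eq_right ht.1]
  set gext : ℝ → ℝ := g ∘ clamp with hgext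
  have hgextc : Continuous gext := hgc.comp_continuous hclampc hclampmem
  have hgexteq : ∀ t ∈ Set.Icc a b, gext t = g t := by
    intro t ht
    simp only [hgext, Function.comp_apply, hclampeq t ht]
  set F : ℝ → ℝ := fun s => ∫ t in a..s, gext t with hF
  have hF' : ∀ s : ℝ, HasDerivAt F (gext s) s := fun s =>
    (hgextc.integral_hasStrictDerivAt a s).hasDerivAt
  have hFa : F a = 0 := by simp [hF]
  have hFeq : ∀ s ∈ Set.Icc a b, F s = ∫ t in a..s, g t := by
    intro s hs
    apply integral_congr
    intro t ht
    rw [Set.uIcc_of_le hs.1] at ht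
    exact hgexteq t ⟨ht.1, ht.2.trans hs.2⟩
  -- Step A : replace q' by (q' - m) + m
  have hE0 : ∫ t in a..b, (v1 t - p2' t) = 0 := by
    have h := integral_eq_sub_of_hasDerivAt
      (f := fun t => v t - (v a * ((t - b) * (t - c) / ((a - b) * (a - c)))
        + v b * ((t - a) * (t - c) / ((b - a) * (b - c)))
        + v c * ((t - a) * (t - b) / ((c - a) * (c - b)))))
      (f' := fun t => v1 t - p2' t) (a := a) (b := b)
      (by
        intro t ht
        rw [hIab] at ht
        exact (hv1 t (hsub ht)).sub (key t))
      (by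
        apply ContinuousOn.intervalIntegrable
        rw [hIab]
        exact (hv1c.mono hsub).sub hp2'cont.continuousOn)
    rw [h]
    field_simp
    ring
  have intE : IntervalIntegrable (fun t => v1 t - p2' t) MeasureTheory.volume a b := by
    apply ContinuousOn.intervalIntegrable
    rw [hIab]
    exact (hv1c.mono hsub).sub hp2'cont.continuousOn
  have intq'mE : IntervalIntegrable (fun t => (q' t - m) * (v1 t - p2' t)) MeasureTheory.volume a b := by
    apply ContinuousOn.intervalIntegrable
    rw [hIab]
    exact (hq'c.sub continuousOn_const).mul ((hv1c.mono hsub).sub hp2'cont.continuousOn)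
  have intmE : IntervalIntegrable (fun t => m * (v1 t - p2' t)) MeasureTheory.volume a b :=
    intE.const_mul m
  have stepA : ∫ t in a..b, q' t * (v1 t - p2' t)
      = ∫ t in a..b, (q' t - m) * (v1 t - p2' t) := by
    have hpt : ∀ t : ℝ, q' t * (v1 t - p2' t)
        = (q' t - m) * (v1 t - p2' t) + m * (v1 t - p2' t) := by intro t; ring
    simp only [hpt]
    rw [integral_add intq'mE intmE, integral_const_mul, hE0, mul_zero, add_zero]
  -- Step B : integrate by parts once
  have stepB : ∫ t in a..b, g t * (v2 t - C)
      = g b * (v1 b - p2' b) - g a * (v1 a - p2' a)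
        - ∫ t in a..b, (q' t - m) * (v1 t - p2' t) := by
    apply integral_mul_deriv_eq_deriv_mul
    · intro t ht; rw [hIab] at ht; exact hg' t ht
    · intro t ht; rw [hIab] at ht; exact (hv2 t (hsub ht)).sub (key2 t)
    · apply ContinuousOn.intervalIntegrable
      rw [hIab]
      exact hq'c.sub continuousOn_const
    · apply ContinuousOn.intervalIntegrable
      rw [hIab]
      exact (hv2c.mono hsub).sub continuousOn_const
  -- Step C : integrate by parts again, against the primitive F
  have stepC : ∫ s in a..b, (v2 s - C) * gext s
      = (v2 b - C) * F b - (v2 a - C) * F a - ∫ s in a..b, v3 s * F s := by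
    apply integral_mul_deriv_eq_deriv_mul
    · intro t ht; rw [hIab] at ht; exact (hv3 t (hsub ht)).sub_const C
    · intro t _; exact hF' t
    · apply ContinuousOn.intervalIntegrable
      rw [hIab]
      exact hv3cont.mono hsub
    · exact hgextc.intervalIntegrable a b
  have hgswap : ∫ t in a..b, g t * (v2 t - C) = ∫ s in a..b, (v2 s - C) * gext s := by
    apply integral_congr
    intro t ht
    rw [hIab] at ht
    show g t * (v2 t - C) = (v2 t - C) * gext t
    rw [hgexteq t ht]
    ring
  -- assemble the left-hand side
  have hLHS : ∫ t in a..b, q' t * (v1 t - p2' t)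
      = (∫ s in a..b, v3 s * F s) - (v2 b - C) * F b := by
    rw [stepA]
    have := stepB
    rw [hga, hgb, hgswap, stepC, hFa] at this
    linarith [this]
  -- Taylor expansions
  have hA : ∫ s in b..c, (c - s) ^ 2 * v3 s
      = -(c - b) ^ 2 * v2 b - 2 * (c - b) * v1 b + 2 * (v c - v b) :=
    taylor_aux_right b c hbc.le v v1 v2 v3
      (fun t ht => hv1 t (hsub' ht)) (fun t ht => hv2 t (hsub' ht))
      (fun t ht => hv3 t (hsub' ht)) (hv3cont.mono hsub')
  have hB : ∫ s in a..b, (s - a) ^ 2 * v3 s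
      = (b - a) ^ 2 * v2 b - 2 * (b - a) * v1 b + 2 * (v b - v a) :=
    taylor_aux_left a b hab.le v v1 v2 v3
      (fun t ht => hv1 t (hsub ht)) (fun t ht => hv2 t (hsub ht))
      (fun t ht => hv3 t (hsub ht)) (hv3cont.mono hsub)
  -- rewrite the goal
  simp only [hderivP2]
  rw [hLHS, hA, hB]
  have hFb : F b = ∫ t in a..b, g t := hFeq b ⟨hab.le, le_rfl⟩
  have hinner : ∫ s in a..b, v3 s * F s = ∫ s in a..b, v3 s * ∫ t in a..s, g t := by
    apply integral_congr
    intro s hs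
    rw [hIab] at hs
    show v3 s * F s = v3 s * ∫ t in a..s, g t
    rw [hFeq s hs]
  rw [hinner, ← hFb]
  have hsum : (c - b) + (b - a) ≠ 0 := by
    intro h; apply hca; linarith
  rw [hC]
  field_simp
  ring
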